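/- Let U be a finite collection of closed arcs in S^1 with all 2n endpoints distinct, such that no arc is contained in another and the cyclic sequence of endpoints alternates between opening endpoints a_i and closing endpoints b_i. Then there exists 0 ≤ k < n such that the nerve complex N(U) is isomorphic to N(n,k). -/

import Mathlib

open Set

/-- The discrete circular arc `[i, i+k]ₙ ⊆ ℤ/n`. -/
def cyclicArc (n k : ℕ) (i : ZMod n) : Finset (ZMod n) :=
  (Finset.range (k + 1)).image (fun j : ℕ => i + (j : ZMod n))

/-- `σ` is a face of the nerve complex `N(n,k)`. -/
def IsFaceN (n k : ℕ) (σ : Finset (ZMod n)) : Prop :=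
  ∃ i : ZMod n, σ ⊆ cyclicArc n k i

/-- The lift to `ℝ` of the cyclic sequence of opening endpoints: `extPts n a t` is the
representative of `a (t mod n)` shifted up by `t / n` full turns. Strict monotonicity of
this lift says the `a`'s appear in clockwise cyclic order. -/
def extPts (n : ℕ) [NeZero n] (a : Fin n → ℝ) (t : ℕ) : ℝ :=
  a ((Fin.ofNat n t)) + ((t / n : ℕ) : ℝ)


open Set
open Fin.NatCast

namespace AltArcsAux

lemma circ_eq_iff (x y : ℝ) : (x : AddCircle (1:ℝ)) = y ↔ ∃ z : ℤ, y = x + z := by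
  rw [show ((x : AddCircle (1:ℝ)) = y) ↔ _ from QuotientAddGroup.eq]
  simp only [AddSubgroup.mem_zmultiples_iff, zsmul_eq_mul, mul_one]
  constructor
  · rintro ⟨z, hz⟩; exact ⟨z, by linarith⟩
  · rintro ⟨z, hz⟩; exact ⟨z, by linarith⟩

lemma circ_int (x : ℝ) (z : ℤ) : ((x + z : ℝ) : AddCircle (1:ℝ)) = x := by
  rw [circ_eq_iff]; exact ⟨-z, by push_cast; ring⟩

lemma image_Icc_shift (u v : ℝ) (z : ℤ) :
    (fun x : ℝ => (x : AddCircle (1:ℝ))) '' Icc (u+z) (v+z)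
      = (fun x : ℝ => (x : AddCircle (1:ℝ))) '' Icc u v := by
  ext w
  simp only [mem_image, mem_Icc]
  constructor
  · rintro ⟨y, ⟨h1, h2⟩, rfl⟩
    refine ⟨y - z, ⟨by linarith, by linarith⟩, ?_⟩
    rw [circ_eq_iff]; exact ⟨z, by push_cast; ring⟩
  · rintro ⟨y, ⟨h1, h2⟩, rfl⟩
    refine ⟨y + z, ⟨by linarith, by linarith⟩, ?_⟩
    exact circ_int y z

variable {n : ℕ} [NeZero n]

/-- the canonical equivalence `Fin n ≃ ZMod n`. -/
def finZMod (n : ℕ) [NeZero n] : Fin n ≃ ZMod n where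
  toFun m := ((m : Fin n).val : ZMod n)
  invFun x := ⟨x.val, ZMod.val_lt x⟩
  left_inv m := by
    ext
    simp [ZMod.val_natCast, Nat.mod_eq_of_lt m.isLt]
  right_inv x := by
    simp only
    exact ZMod.natCast_rightInverse x

omit [NeZero n] in
lemma mem_cyclicArc_iff (k : ℕ) (i y : ZMod n) :
    y ∈ cyclicArc n k i ↔ ∃ c : ℕ, c ≤ k ∧ y = i + c := by
  simp only [cyclicArc, Finset.mem_image, Finset.mem_range, Nat.lt_succ_iff]
  constructor
  · rintro ⟨c, hc, rfl⟩; exact ⟨c, hc, rfl⟩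
  · rintro ⟨c, hc, rfl⟩; exact ⟨c, hc, rfl⟩

lemma fin_cast_add_n (t : ℕ) : ((t + n : ℕ) : Fin n) = (t : Fin n) := by
  simp [Nat.cast_add, Fin.natCast_self]

lemma fin_cast_eq_iff (s t : ℕ) : (s : Fin n) = (t : Fin n) ↔ s % n = t % n := by
  rw [Fin.ext_iff, Fin.val_natCast, Fin.val_natCast]

lemma extPts_add_n (a : Fin n → ℝ) (t : ℕ) : extPts n a (t + n) = extPts n a t + 1 := by
  have hn : 0 < n := Nat.pos_of_ne_zero (NeZero.ne n)
  unfold extPts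
  rw [Fin.ofNat_eq_cast, Fin.ofNat_eq_cast, fin_cast_add_n, Nat.add_div_right _ hn]
  push_cast; ring

lemma extPts_add_mul (a : Fin n → ℝ) (t w : ℕ) :
    extPts n a (t + w * n) = extPts n a t + w := by
  induction w with
  | zero => simp
  | succ w ih =>
    have : t + (w + 1) * n = (t + w * n) + n := by ring
    rw [this, extPts_add_n, ih]; push_cast; ring

end AltArcsAux

theorem alternating_arcs_nerve_iso (n : ℕ) [NeZero n]
    (U : Fin n → Set (AddCircle (1 : ℝ))) (a b : Fin n → ℝ)
    (hU : ∀ m, U m = (fun x : ℝ => (x : AddCircle (1 : ℝ))) '' Icc (a m) (b m))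
    (hlen : ∀ m, a m ≤ b m ∧ b m < a m + 1)
    (hmono : StrictMono (extPts n a))
    (hinja : Function.Injective fun m : Fin n => ((a m : ℝ) : AddCircle (1 : ℝ)))
    (hinjb : Function.Injective fun m : Fin n => ((b m : ℝ) : AddCircle (1 : ℝ)))
    (hanb : ∀ m m' : Fin n, ((a m : ℝ) : AddCircle (1 : ℝ)) ≠ ((b m' : ℝ) : AddCircle (1 : ℝ)))
    (hnosub : ∀ m m' : Fin n, m ≠ m' → ¬ U m ⊆ U m')
    (halt : ∀ i : ℕ, i < n → ∃! m : Fin n, ∃ z : ℤ,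
      extPts n a i < b m + z ∧ b m + z < extPts n a (i + 1)) :
    ∃ k < n, ∃ e : Fin n ≃ ZMod n, ∀ σ : Finset (Fin n),
      (⋂ m ∈ σ, U m).Nonempty ↔ IsFaceN n k (σ.image e) := by
  classical
  have hn : 0 < n := Nat.pos_of_ne_zero (NeZero.ne n)
  set A : ℕ → ℝ := extPts n a with hA
  set Bf : ℕ → ℝ := fun t => b ((t : Fin n)) + ((t / n : ℕ) : ℝ) with hBf
  have hAper : ∀ t, A (t + n) = A t + 1 := fun t => AltArcsAux.extPts_add_n a t
  have hAmul : ∀ t w, A (t + w * n) = A t + w := fun t w => AltArcsAux.extPts_add_mul a t w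
  have hBper : ∀ t, Bf (t + n) = Bf t + 1 := by
    intro t
    simp only [hBf, AltArcsAux.fin_cast_add_n, Nat.add_div_right _ hn]
    push_cast; ring
  have hBmul : ∀ t w, Bf (t + w * n) = Bf t + w := by
    intro t w
    induction w with
    | zero => simp
    | succ w ih =>
      have h : t + (w + 1) * n = (t + w * n) + n := by ring
      rw [h, hBper, ih]; push_cast; ring
  have hAm : ∀ m : Fin n, A m.val = a m := by
    intro m
    simp only [hA, extPts, Fin.cast_val_eq_self, Nat.div_eq_of_lt m.isLt]
    simp
  have hBm : ∀ m : Fin n, Bf m.val = b m := by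
    intro m
    simp only [hBf, Fin.cast_val_eq_self, Nat.div_eq_of_lt m.isLt]
    simp
  have hAB_ne : ∀ s t : ℕ, A s ≠ Bf t := by
    intro s t h
    apply hanb ((s : Fin n)) ((t : Fin n))
    set c : ℤ := ((t / n : ℕ) : ℤ) - ((s / n : ℕ) : ℤ) with hc
    have h' : a ((s : Fin n)) = b ((t : Fin n)) + (c : ℝ) := by
      rw [hc, Int.cast_sub, Int.cast_natCast, Int.cast_natCast]
      simp only [hA, hBf, extPts, Fin.ofNat_eq_cast] at h
      linarith
    rw [h', AltArcsAux.circ_int]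
  have hab : ∀ m : Fin n, a m < b m := by
    intro m
    refine lt_of_le_of_ne (hlen m).1 (fun h => hanb m m (by rw [h]))
  have hABlt : ∀ t, A t < Bf t := by
    intro t
    simp only [hA, hBf, extPts, Fin.ofNat_eq_cast]
    exact add_lt_add_left (hab _) _
  have hBAlt : ∀ t, Bf t < A t + 1 := by
    intro t
    simp only [hA, hBf, extPts, Fin.ofNat_eq_cast]
    have := (hlen ((t : Fin n))).2
    linarith
  have hBAn : ∀ t, Bf t < A (t + n) := fun t => by rw [hAper]; exact hBAlt t
  have hexp : ∀ t : ℕ, ∃ i, Bf t < A (i + 1) := by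
    intro t
    refine ⟨t + n - 1, ?_⟩
    rw [show t + n - 1 + 1 = t + n by omega]
    exact hBAn t
  set p : ℕ → ℕ := fun t => Nat.find (hexp t) with hp
  have hpU : ∀ t, Bf t < A (p t + 1) := fun t => Nat.find_spec (hexp t)
  have hpL : ∀ t, A (p t) < Bf t := by
    intro t
    rcases Nat.eq_zero_or_pos (p t) with h0 | h0
    · rw [h0]
      exact lt_of_le_of_lt (hmono.monotone (Nat.zero_le t)) (hABlt t)
    · have hmin := Nat.find_min (hexp t) (show p t - 1 < p t by omega)
      rw [show p t - 1 + 1 = p t by omega] at hmin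
      push_neg at hmin
      exact lt_of_le_of_ne hmin (hAB_ne _ _)
  have hple : ∀ t, t ≤ p t := by
    intro t
    have h1 : A t < A (p t + 1) := (hABlt t).trans (hpU t)
    have := hmono.lt_iff_lt.mp h1
    omega
  have hplt : ∀ t, p t < t + n := by
    intro t
    have : p t ≤ t + n - 1 := Nat.find_le (by rw [show t + n - 1 + 1 = t + n by omega]; exact hBAn t)
    omega
  have hpchar : ∀ t i, A i < Bf t → Bf t < A (i + 1) → p t = i := by
    intro t i h1 h2
    have a1 : p t < i + 1 := hmono.lt_iff_lt.mp ((hpL t).trans h2)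
    have a2 : i < p t + 1 := hmono.lt_iff_lt.mp (h1.trans (hpU t))
    omega
  have hWall : ∀ i : ℕ, ∃! m : Fin n, ∃ z : ℤ, A i < b m + z ∧ b m + z < A (i + 1) := by
    have hWper : ∀ (i : ℕ) (m : Fin n),
        (∃ z : ℤ, A (i + n) < b m + z ∧ b m + z < A (i + n + 1)) ↔
        (∃ z : ℤ, A i < b m + z ∧ b m + z < A (i + 1)) := by
      intro i m
      have e1 : A (i + n) = A i + 1 := hAper i
      have e2 : A (i + n + 1) = A (i + 1) + 1 := by
        rw [show i + n + 1 = (i + 1) + n by omega]; exact hAper (i + 1)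
      constructor
      · rintro ⟨z, h1, h2⟩
        exact ⟨z - 1, by rw [e1] at h1; rw [e2] at h2; push_cast; constructor <;> linarith⟩
      · rintro ⟨z, h1, h2⟩
        exact ⟨z + 1, by rw [e1, e2]; push_cast; constructor <;> linarith⟩
    have key : ∀ (q r : ℕ), r < n → ∃! m : Fin n, ∃ z : ℤ,
        A (r + q * n) < b m + z ∧ b m + z < A (r + q * n + 1) := by
      intro q
      induction q with
      | zero => intro r hr; simpa using halt r hr
      | succ q ih =>
        intro r hr
        obtain ⟨m, hm, hu⟩ := ih r hr
        rw [show r + (q + 1) * n = (r + q * n) + n by ring]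
        exact ⟨m, (hWper _ m).mpr hm, fun m' hm' => hu m' ((hWper _ m').mp hm')⟩
    intro i
    have := key (i / n) (i % n) (Nat.mod_lt i hn)
    rwa [Nat.mod_add_div' i n] at this
  have hWp : ∀ t : ℕ, ∃ z : ℤ,
      A (p t) < b ((t : Fin n)) + z ∧ b ((t : Fin n)) + z < A (p t + 1) := by
    intro t
    refine ⟨((t / n : ℕ) : ℤ), ?_, ?_⟩
    · have h1 := hpL t; simp only [hBf] at h1; rw [Int.cast_natCast]; linarith
    · have h2 := hpU t; simp only [hBf] at h2; rw [Int.cast_natCast]; linarith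
  have hsub : ∀ (m m' : Fin n) (z : ℤ), a m' ≤ a m + z → b m + z ≤ b m' → U m ⊆ U m' := by
    intro m m' z h1 h2
    rw [hU m, hU m']
    rw [← AltArcsAux.image_Icc_shift (a m) (b m) z]
    exact Set.image_mono  (Set.Icc_subset_Icc h1 h2)
  have hL : ∀ s t : ℕ, ((s : Fin n)) ≠ ((t : Fin n)) →
      ∀ z : ℤ, A s ≤ A t + z → Bf t + z ≤ Bf s → False := by
    intro s t hne z h1 h2
    apply hnosub ((t : Fin n)) ((s : Fin n)) hne.symm
    refine hsub _ _ (z + ((t / n : ℕ) : ℤ) - ((s / n : ℕ) : ℤ)) ?_ ?_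
    · simp only [hA, extPts, Fin.ofNat_eq_cast] at h1
      rw [Int.cast_sub, Int.cast_add, Int.cast_natCast, Int.cast_natCast]
      linarith
    · simp only [hBf] at h2
      rw [Int.cast_sub, Int.cast_add, Int.cast_natCast, Int.cast_natCast]
      linarith
  have hres_ne : ∀ t : ℕ, 2 ≤ n → ((t : Fin n)) ≠ (((t + 1 : ℕ) : Fin n)) := by
    intro t h2 h
    rw [AltArcsAux.fin_cast_eq_iff] at h
    have hd : n ∣ (t + 1) - t := (Nat.modEq_iff_dvd' (by omega)).mp h
    have := Nat.le_of_dvd (by omega) hd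
    omega
  have hBstep : ∀ t, Bf t < Bf (t + 1) := by
    intro t
    rcases eq_or_lt_of_le (show 1 ≤ n from hn) with h1 | h2
    · have : Bf (t + 1) = Bf t + 1 := by
        rw [show t + 1 = t + n by omega]; exact hBper t
      linarith
    · by_contra hle
      push_neg at hle
      exact hL t (t + 1) (hres_ne t h2) 0
        (by push_cast; simpa using hmono.monotone (show t ≤ t + 1 by omega))
        (by push_cast; linarith)
  have hBmono : StrictMono Bf := strictMono_nat_of_lt_succ hBstep
  have hpstep : ∀ t, p (t + 1) = p t + 1 := by
    intro t
    apply hpchar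
    · -- A (p t + 1) < Bf (t + 1)
      rcases lt_or_ge (A (p t + 1)) (Bf (t + 1)) with h | h
      · exact h
      · exfalso
        have hlt : Bf (t + 1) < A (p t + 1) := lt_of_le_of_ne h (fun he => hAB_ne _ _ he.symm)
        rcases eq_or_lt_of_le (show 1 ≤ n from hn) with h1 | h2
        · have e1 : Bf (t + 1) = Bf t + 1 := by
            rw [show t + 1 = t + n by omega]; exact hBper t
          have e2 : A (p t + 1) = A (p t) + 1 := by
            rw [show p t + 1 = p t + n by omega]; exact hAper (p t)
          have := hpL t
          linarith
        · obtain ⟨m, hm, hu⟩ := hWall (p t)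
          have e1 : ((t : Fin n)) = m := hu _ (hWp t)
          have e2 : (((t + 1 : ℕ) : Fin n)) = m := by
            apply hu
            refine ⟨(((t + 1) / n : ℕ) : ℤ), ?_, ?_⟩
            · rw [Int.cast_natCast]
              have h3 := hpL t
              have h4 := hBstep t
              simp only [hBf] at h3 h4
              linarith
            · rw [Int.cast_natCast]
              simp only [hBf] at hlt
              linarith
          exact hres_ne t h2 (e1.trans e2.symm)
    · -- Bf (t + 1) < A (p t + 1 + 1)
      by_contra hle
      push_neg at hle
      obtain ⟨m, ⟨z, hz1, hz2⟩, -⟩ := hWall (p t + 1)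
      have hgt : Bf t < b m + z := (hpU t).trans hz1
      have hlt2 : (b m + z : ℝ) < Bf (t + 1) := lt_of_lt_of_le hz2 hle
      have hz0 : 0 ≤ z := by
        by_contra hneg
        push_neg at hneg
        have hz1' : (z : ℝ) ≤ -1 := by
          have : z ≤ -1 := by omega
          exact_mod_cast this
        have h3 : Bf (m.val) < Bf 0 + 1 := by
          have := hBmono (show m.val < 0 + n by omega)
          rw [show (0 : ℕ) + n = 0 + n from rfl, hBper 0] at this
          linarith
        have h4 : Bf 0 ≤ Bf t := hBmono.monotone (Nat.zero_le t)
        rw [hBm m] at h3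
        linarith
      have hBs : Bf (m.val + z.toNat * n) = b m + z := by
        rw [hBmul, hBm]
        congr 1
        rw [show ((z.toNat : ℕ) : ℝ) = ((z.toNat : ℤ) : ℝ) by push_cast; ring,
          Int.toNat_of_nonneg hz0]
      have c1 : t < m.val + z.toNat * n := hBmono.lt_iff_lt.mp (by rw [hBs]; exact hgt)
      have c2 : m.val + z.toNat * n < t + 1 := hBmono.lt_iff_lt.mp (by rw [hBs]; exact hlt2)
      omega
  set k : ℕ := p 0 with hk
  have hkn : k < n := by have := hplt 0; omega
  have hpk : ∀ t, p t = t + k := by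
    intro t
    induction t with
    | zero => omega
    | succ t ih => rw [hpstep, ih]; omega
  refine ⟨k, hkn, AltArcsAux.finZMod n, fun σ => ?_⟩
  constructor
  · -- nonempty → face
    rintro ⟨x, hx⟩
    simp only [Set.mem_iInter] at hx
    obtain ⟨y, hy⟩ : ∃ y : ℝ, (y : AddCircle (1:ℝ)) = x := Quotient.exists_rep x
    set z₀ : ℤ := ⌈A n - y⌉ with hz₀
    set x' : ℝ := y + z₀ with hx'
    have hx'c : (x' : AddCircle (1:ℝ)) = x := by rw [hx', AltArcsAux.circ_int, hy]
    have hx'1 : A n ≤ x' := by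
      have := Int.le_ceil (A n - y)
      rw [hx']; linarith
    have hx'2 : x' < A n + 1 := by
      have := Int.ceil_lt_add_one (A n - y)
      rw [hx']; linarith
    have hexi : ∃ i, x' < A (i + 1) := by
      refine ⟨2 * n - 1, ?_⟩
      rw [show 2 * n - 1 + 1 = n + n by omega, hAper]
      linarith
    set i : ℕ := Nat.find hexi with hi
    have hiU : x' < A (i + 1) := Nat.find_spec hexi
    have hiL : A i ≤ x' := by
      rcases Nat.eq_zero_or_pos i with h0 | h0
      · rw [h0]
        exact le_trans (hmono.monotone (Nat.zero_le n)) hx'1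
      · have hmin := Nat.find_min hexi (show i - 1 < i by omega)
        rw [show i - 1 + 1 = i by omega] at hmin
        push_neg at hmin
        exact hmin
    have hin : n ≤ i := by
      have : n < i + 1 := hmono.lt_iff_lt.mp (lt_of_le_of_lt hx'1 hiU)
      omega
    refine ⟨((i - k : ℕ) : ZMod n), ?_⟩
    intro ym hym
    obtain ⟨m, hmσ, rfl⟩ := Finset.mem_image.mp hym
    have hxm : x ∈ U m := hx m hmσ
    rw [hU] at hxm
    obtain ⟨ym', ⟨hy1, hy2⟩, hy3⟩ := hxm
    have hcc : (ym' : AddCircle (1:ℝ)) = (x' : AddCircle (1:ℝ)) := hy3.trans hx'c.symm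
    obtain ⟨z, hz⟩ := (AltArcsAux.circ_eq_iff ym' x').mp hcc
    have hz0 : 0 ≤ z := by
      by_contra hneg
      push_neg at hneg
      have hz1' : (z : ℝ) ≤ -1 := by
        have : z ≤ -1 := by omega
        exact_mod_cast this
      -- a m + z > A n - 1 but a m + z ≤ a m - 1 < A n - 1
      have h1 : a m + (z : ℝ) > A n - 1 := by
        have hb := (hlen m).2
        have h0 := hx'1
        rw [hz] at h0
        have : b m + (z : ℝ) ≥ A n := by linarith
        linarith
      have h2 : A m.val < A n := hmono m.isLt
      rw [hAm m] at h2
      linarith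
    have hAs : A (m.val + z.toNat * n) = a m + z := by
      rw [hAmul, hAm]
      congr 1
      rw [show ((z.toNat : ℕ) : ℝ) = ((z.toNat : ℤ) : ℝ) by push_cast; ring,
        Int.toNat_of_nonneg hz0]
    have hBs : Bf (m.val + z.toNat * n) = b m + z := by
      rw [hBmul, hBm]
      congr 1
      rw [show ((z.toNat : ℕ) : ℝ) = ((z.toNat : ℤ) : ℝ) by push_cast; ring,
        Int.toNat_of_nonneg hz0]
    set s : ℕ := m.val + z.toNat * n with hs
    have hsx1 : A s ≤ x' := by rw [hAs, hz]; linarith [hy1]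
    have hsx2 : x' ≤ Bf s := by rw [hBs, hz]; linarith [hy2]
    have hsle : s ≤ i := by
      have : s < i + 1 := hmono.lt_iff_lt.mp (lt_of_le_of_lt hsx1 hiU)
      omega
    have hips : i ≤ s + k := by
      have hBsi : A i < Bf s := lt_of_le_of_ne (le_trans hiL hsx2) (hAB_ne i s)
      have : i < p s + 1 := hmono.lt_iff_lt.mp (lt_trans hBsi (hpU s))
      rw [hpk s] at this
      omega
    have hki : k ≤ i := le_trans (le_of_lt hkn) hin
    refine (AltArcsAux.mem_cyclicArc_iff k _ _).mpr ⟨s - (i - k), by omega, ?_⟩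
    -- finZMod n m = ((i - k : ℕ) : ZMod n) + ((s - (i - k) : ℕ) : ZMod n)
    have hsm : ((s : ℕ) : ZMod n) = ((m.val : ℕ) : ZMod n) := by
      rw [hs]
      push_cast
      simp [ZMod.natCast_self]
    have : AltArcsAux.finZMod n m = ((s : ℕ) : ZMod n) := by
      simp only [AltArcsAux.finZMod, Equiv.coe_fn_mk]
      rw [hsm]
    rw [this, ← Nat.cast_add]
    congr 1
    omega
  · -- face → nonempty
    rintro ⟨i, hsubσ⟩
    refine ⟨((Bf i.val : ℝ) : AddCircle (1:ℝ)), ?_⟩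
    simp only [Set.mem_iInter]
    intro m hm
    have hmem := hsubσ (Finset.mem_image_of_mem _ hm)
    rw [AltArcsAux.mem_cyclicArc_iff] at hmem
    obtain ⟨c, hc, hceq⟩ := hmem
    set j : ℕ := i.val with hj
    set t : ℕ := j + c with ht
    have htm : ((t : ℕ) : Fin n) = m := by
      have h1 : ((t : ℕ) : ZMod n) = ((m.val : ℕ) : ZMod n) := by
        have h0 : ((m.val : ℕ) : ZMod n) = AltArcsAux.finZMod n m := rfl
        rw [h0, hceq, ht, Nat.cast_add, hj, ZMod.natCast_rightInverse i]
      have h2 : t % n = m.val % n := by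
        have := congrArg ZMod.val h1
        rwa [ZMod.val_natCast, ZMod.val_natCast] at this
      apply Fin.ext
      rw [Fin.val_natCast, h2, Nat.mod_eq_of_lt m.isLt]
    have hb1 : A t ≤ A (j + k) := hmono.monotone (by omega)
    have hb2 : A (j + k) < Bf j := by have := hpL j; rwa [hpk j] at this
    have hb3 : Bf j ≤ Bf t := hBmono.monotone (by omega)
    rw [hU]
    rw [← AltArcsAux.image_Icc_shift (a m) (b m) ((t / n : ℕ) : ℤ)]
    refine ⟨Bf j, ⟨?_, ?_⟩, rfl⟩
    · have hAt : A t = a m + ((t / n : ℕ) : ℝ) := by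
        simp only [hA, extPts, Fin.ofNat_eq_cast, htm]
      rw [Int.cast_natCast, ← hAt]
      exact le_of_lt (lt_of_le_of_lt hb1 hb2)
    · have hBt : Bf t = b m + ((t / n : ℕ) : ℝ) := by
        simp only [hBf, htm]
      rw [Int.cast_natCast, ← hBt]
      exact hb3
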